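/- For k ≥ 2, a layer L of a subdivided wall W that is different from the perimeter and defines a subwall of height k contains exactly 4k − 2 important vertices. -/

import Mathlib

/-- `v` (with 1-indexed coordinates `(x, y)`) is a vertex of the wall `W_k` of height `k`:
it lies in the `(k+1) × (2k+2)` grid and is not one of the vertices of degree 1 that get
deleted in the construction of the wall. -/
def IsWallVertex (k : ℕ) (v : ℕ × ℕ) : Prop :=
  1 ≤ v.1 ∧ v.1 ≤ 2 * k + 2 ∧ 1 ≤ v.2 ∧ v.2 ≤ k + 1 ∧
  ¬(v.1 = 2 * k + 2 ∧ v.2 = 1) ∧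
  ¬(v.1 = 1 ∧ v.2 = k + 1 ∧ Even k) ∧
  ¬(v.1 = 2 * k + 2 ∧ v.2 = k + 1 ∧ Odd k)

/-- Adjacency of the wall `W_k`: horizontal grid edges, together with the vertical grid
edges `{(x,y),(x,y+1)}` for which `x + y` is even (equivalently, the vertical edges with
`x + y` odd have been removed). -/
def wallAdj (k : ℕ) (u v : ℕ × ℕ) : Prop :=
  IsWallVertex k u ∧ IsWallVertex k v ∧
  ((u.2 = v.2 ∧ (u.1 + 1 = v.1 ∨ v.1 + 1 = u.1)) ∨
   (u.1 = v.1 ∧ ((u.2 + 1 = v.2 ∧ Even (u.1 + u.2)) ∨ (v.2 + 1 = u.2 ∧ Even (v.1 + v.2)))))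

/-- The wall `W_k` of height `k`, as a simple graph on `ℕ × ℕ` (vertices outside the wall
are isolated). -/
def wallGraph (k : ℕ) : SimpleGraph (ℕ × ℕ) where
  Adj := wallAdj k
  symm := by
    constructor
    rintro u v ⟨hu, hv, hc⟩
    refine ⟨hv, hu, ?_⟩
    rcases hc with ⟨h1, h2⟩ | ⟨h1, h2⟩
    · exact Or.inl ⟨h1.symm, h2.symm⟩
    · exact Or.inr ⟨h1.symm, h2.symm⟩
  loopless := by
    constructor
    rintro u ⟨-, -, hc⟩
    rcases hc with ⟨-, h2⟩ | ⟨-, h2⟩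
    · omega
    · rcases h2 with ⟨h3, -⟩ | ⟨h3, -⟩ <;> omega

/-- The degree of a vertex in a (possibly infinite) simple graph, as the cardinality of its
neighbourhood. -/
noncomputable def vdeg {α : Type*} (G : SimpleGraph α) (v : α) : ℕ := (G.neighborSet v).ncard

/-- The vertices of the perimeter (boundary cycle) of the wall `W_k`: the union of the
northern and southern horizontal paths with the westernmost and easternmost vertical
(zigzag) paths. -/
def wallPerimeter (k : ℕ) : Set (ℕ × ℕ) :=
  {v | IsWallVertex k v ∧
    (v.2 = 1 ∨ v.2 = k + 1 ∨ v.1 = 1 ∨ v.1 = 2 ∨ v.1 = 2 * k + 1 ∨ v.1 = 2 * k + 2)}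

/-- The rectangular region of the wall `W_m` delimited by its `i`-th layer. -/
def wallRegion (m i : ℕ) : Set (ℕ × ℕ) :=
  {v | IsWallVertex m v ∧ i ≤ v.2 ∧ v.2 ≤ m + 2 - i ∧
    2 * i - 1 ≤ v.1 ∧ v.1 ≤ 2 * m + 4 - 2 * i}

/-- The vertex set of the subwall of `W_m` defined by its `i`-th layer: the vertices of
the region delimited by the layer that survive the deletion of vertices of degree 1
(this is the wall obtained by recursively peeling off the first `i - 1` layers). -/
def subwallSet (m i : ℕ) : Set (ℕ × ℕ) :=
  {v ∈ wallRegion m i |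
    2 ≤ ((wallGraph m).neighborSet v ∩ wallRegion m i).ncard}

/-- The `i`-th layer of the wall `W_m`: the perimeter of the subwall defined by it. -/
def layerSet (m i : ℕ) : Set (ℕ × ℕ) :=
  {v ∈ subwallSet m i |
    v.2 = i ∨ v.2 = m + 2 - i ∨ v.1 = 2 * i - 1 ∨ v.1 = 2 * i ∨
    v.1 = 2 * m + 3 - 2 * i ∨ v.1 = 2 * m + 4 - 2 * i}

/-- The four corners of the subwall of `W_m` defined by its `i`-th layer: the endpoints of
its northern and southern horizontal paths. -/
def subwallCorners (m i : ℕ) : Set (ℕ × ℕ) :=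
  {v ∈ layerSet m i | (v.2 = i ∨ v.2 = m + 2 - i) ∧
    ¬((v.1 - 1, v.2) ∈ subwallSet m i ∧ (v.1 + 1, v.2) ∈ subwallSet m i)}

/-- The important vertices of the `i`-th layer of `W_m`: the (original) vertices on the
layer that have degree 2 in the subwall `W'` defined by the layer and are not corners
of `W'`. -/
def importantVertices (m i : ℕ) : Set (ℕ × ℕ) :=
  {v ∈ layerSet m i |
    ((wallGraph m).neighborSet v ∩ subwallSet m i).ncard = 2 ∧
    v ∉ subwallCorners m i}

lemma aux_two_le {α : Type*} {p q : α} {s : Set α} (hpq : p ≠ q) (hp : p ∈ s) (hq : q ∈ s)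
    (hs : s.Finite) : 2 ≤ s.ncard := by
  have h := Set.ncard_le_ncard (Set.pair_subset hp hq) hs
  rwa [Set.ncard_pair hpq] at h

lemma aux_three_le {α : Type*} {p q r : α} {s : Set α} (hpq : p ≠ q) (hpr : p ≠ r)
    (hqr : q ≠ r) (hp : p ∈ s) (hq : q ∈ s) (hr : r ∈ s) (hs : s.Finite) : 3 ≤ s.ncard := by
  have hsub : ({p, q, r} : Set α) ⊆ s := by
    intro z hz
    rcases hz with rfl | rfl | rfl <;> assumption
  have h := Set.ncard_le_ncard hsub hs
  rw [Set.ncard_insert_of_notMem (by simp [hpq, hpr]), Set.ncard_pair hqr] at h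
  omega

lemma nbr_subset (m : ℕ) (v : ℕ × ℕ) :
    (wallGraph m).neighborSet v ⊆
      {(v.1 + 1, v.2), (v.1 - 1, v.2), (v.1, v.2 + 1), (v.1, v.2 - 1)} := by
  rintro ⟨a, b⟩ h
  have h' : wallAdj m v (a, b) := h
  obtain ⟨-, -, hc⟩ := h'
  simp only [Set.mem_insert_iff, Set.mem_singleton_iff, Prod.mk.injEq]
  rcases hc with ⟨h1, h2⟩ | ⟨h1, h2⟩
  · omega
  · rcases h2 with ⟨h3, -⟩ | ⟨h3, -⟩ <;> omega

lemma nbr_finite (m : ℕ) (v : ℕ × ℕ) : ((wallGraph m).neighborSet v).Finite :=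
  (Set.toFinite _).subset (nbr_subset m v)

lemma wv_aux (m i k : ℕ) (hi : 2 ≤ i) (hk : 2 ≤ k) (hmk : m + 2 = k + 2 * i)
    (x y : ℕ) (h1 : 2 * i - 2 ≤ x) (h2 : x ≤ 2 * k + 2 * i + 1)
    (h3 : i - 1 ≤ y) (h4 : y ≤ k + i + 1) : IsWallVertex m (x, y) := by
  refine ⟨by omega, by omega, by omega, by omega, by omega, fun h => ?_, fun h => ?_⟩
  · obtain ⟨e1, e2, -⟩ := h; omega
  · obtain ⟨e1, e2, -⟩ := h; omega

lemma region_eq (m i k : ℕ) (hi : 2 ≤ i) (hk : 2 ≤ k) (hmk : m + 2 = k + 2 * i) :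
    wallRegion m i =
      {v | 2 * i - 1 ≤ v.1 ∧ v.1 ≤ 2 * k + 2 * i ∧ i ≤ v.2 ∧ v.2 ≤ k + i} := by
  ext ⟨x, y⟩
  simp only [wallRegion, Set.mem_setOf_eq]
  constructor
  · rintro ⟨-, h⟩
    omega
  · rintro ⟨h1, h2, h3, h4⟩
    exact ⟨wv_aux m i k hi hk hmk x y (by omega) (by omega) (by omega) (by omega),
      by omega, by omega, by omega, by omega⟩

lemma mem_nbr_reg (m i k : ℕ) (hi : 2 ≤ i) (hk : 2 ≤ k) (hmk : m + 2 = k + 2 * i)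
    (x y a b : ℕ) (hx1 : 2 * i - 1 ≤ x) (hx2 : x ≤ 2 * k + 2 * i)
    (hy1 : i ≤ y) (hy2 : y ≤ k + i) :
    ((a, b) ∈ (wallGraph m).neighborSet (x, y) ∩ wallRegion m i) ↔
      ((2 * i - 1 ≤ a ∧ a ≤ 2 * k + 2 * i ∧ i ≤ b ∧ b ≤ k + i) ∧
       ((b = y ∧ (a = x + 1 ∨ a + 1 = x)) ∨
        (a = x ∧ ((b = y + 1 ∧ (x + y) % 2 = 0) ∨ (b + 1 = y ∧ (x + b) % 2 = 0))))) := by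
  rw [Set.mem_inter_iff, region_eq m i k hi hk hmk]
  constructor
  · rintro ⟨hadj, hreg⟩
    have h' : wallAdj m (x, y) (a, b) := hadj
    obtain ⟨-, -, hc⟩ := h'
    refine ⟨hreg, ?_⟩
    rcases hc with ⟨h1, h2⟩ | ⟨h1, h2⟩
    · exact Or.inl ⟨h1.symm, by omega⟩
    · rcases h2 with ⟨h2, h3⟩ | ⟨h2, h3⟩
      · rw [Nat.even_iff] at h3
        exact Or.inr ⟨h1.symm, Or.inl ⟨by omega, by simpa using h3⟩⟩
      · rw [Nat.even_iff] at h3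
        simp only at h3
        exact Or.inr ⟨h1.symm, Or.inr ⟨by omega, by omega⟩⟩
  · rintro ⟨hreg, hc⟩
    obtain ⟨ha1, ha2, hb1, hb2⟩ := hreg
    have hwu : IsWallVertex m (x, y) := wv_aux m i k hi hk hmk x y (by omega) (by omega) (by omega) (by omega)
    have hwv : IsWallVertex m (a, b) := wv_aux m i k hi hk hmk a b (by omega) (by omega) (by omega) (by omega)
    refine ⟨show wallAdj m (x, y) (a, b) from ⟨hwu, hwv, ?_⟩, by omega, by omega, by omega, by omega⟩
    rcases hc with ⟨h1, h2⟩ | ⟨h1, h2⟩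
    · exact Or.inl ⟨h1.symm, by omega⟩
    · rcases h2 with ⟨h2, h3⟩ | ⟨h2, h3⟩
      · exact Or.inr ⟨h1.symm, Or.inl ⟨by omega, Nat.even_iff.2 (by omega)⟩⟩
      · exact Or.inr ⟨h1.symm, Or.inr ⟨by omega, Nat.even_iff.2 (by simp only; omega)⟩⟩

lemma subwall_eq (m i k : ℕ) (hi : 2 ≤ i) (hk : 2 ≤ k) (hmk : m + 2 = k + 2 * i) :
    subwallSet m i = {v | (2 * i - 1 ≤ v.1 ∧ v.1 ≤ 2 * k + 2 * i ∧ i ≤ v.2 ∧ v.2 ≤ k + i) ∧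
      ¬((v.1 = 2 * i - 1 ∧ v.2 = i ∧ i % 2 = 0) ∨
        (v.1 = 2 * k + 2 * i ∧ v.2 = i ∧ i % 2 = 1) ∨
        (v.1 = 2 * i - 1 ∧ v.2 = k + i ∧ (k + i) % 2 = 1) ∨
        (v.1 = 2 * k + 2 * i ∧ v.2 = k + i ∧ (k + i) % 2 = 0))} := by
  have hreg := region_eq m i k hi hk hmk
  ext ⟨x, y⟩
  simp only [subwallSet, Set.mem_setOf_eq]
  constructor
  · rintro ⟨hregmem, hcard⟩
    rw [hreg] at hregmem
    obtain ⟨hx1, hx2, hy1, hy2⟩ := hregmem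
    refine ⟨⟨hx1, hx2, hy1, hy2⟩, fun hdel => ?_⟩
    have key : ∀ p : ℕ × ℕ,
        ((wallGraph m).neighborSet (x, y) ∩ wallRegion m i ⊆ {p}) → False := by
      intro p hsub
      have h := Set.ncard_le_ncard hsub (Set.finite_singleton p)
      rw [Set.ncard_singleton] at h
      omega
    rcases hdel with ⟨e1, e2, e3⟩ | ⟨e1, e2, e3⟩ | ⟨e1, e2, e3⟩ | ⟨e1, e2, e3⟩
    · exact key (2 * i, i) (by
        rintro ⟨a, b⟩ hm
        rw [mem_nbr_reg m i k hi hk hmk x y a b hx1 hx2 hy1 hy2] at hm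
        simp only [Set.mem_singleton_iff, Prod.mk.injEq]
        omega)
    · exact key (2 * k + 2 * i - 1, i) (by
        rintro ⟨a, b⟩ hm
        rw [mem_nbr_reg m i k hi hk hmk x y a b hx1 hx2 hy1 hy2] at hm
        simp only [Set.mem_singleton_iff, Prod.mk.injEq]
        omega)
    · exact key (2 * i, k + i) (by
        rintro ⟨a, b⟩ hm
        rw [mem_nbr_reg m i k hi hk hmk x y a b hx1 hx2 hy1 hy2] at hm
        simp only [Set.mem_singleton_iff, Prod.mk.injEq]
        omega)
    · exact key (2 * k + 2 * i - 1, k + i) (by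
        rintro ⟨a, b⟩ hm
        rw [mem_nbr_reg m i k hi hk hmk x y a b hx1 hx2 hy1 hy2] at hm
        simp only [Set.mem_singleton_iff, Prod.mk.injEq]
        omega)
  · rintro ⟨⟨hx1, hx2, hy1, hy2⟩, hdel⟩
    refine ⟨by rw [hreg]; exact ⟨hx1, hx2, hy1, hy2⟩, ?_⟩
    have hfin : ((wallGraph m).neighborSet (x, y) ∩ wallRegion m i).Finite :=
      (nbr_finite m (x, y)).inter_of_left _
    have hmem := fun a b => mem_nbr_reg m i k hi hk hmk x y a b hx1 hx2 hy1 hy2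
    by_cases hxl : x = 2 * i - 1
    · by_cases hpar : (x + y) % 2 = 0
      · have hylt : y < k + i := by omega
        have hp : ((2 * i, y) : ℕ × ℕ) ∈ _ := (hmem (2 * i) y).2 ⟨by omega, by omega⟩
        have hq : ((x, y + 1) : ℕ × ℕ) ∈ _ := (hmem x (y + 1)).2 ⟨by omega, by omega⟩
        exact aux_two_le (by simp only [ne_eq, Prod.mk.injEq, not_and]; omega) hp hq hfin
      · have hygt : i < y := by omega
        have hp : ((2 * i, y) : ℕ × ℕ) ∈ _ := (hmem (2 * i) y).2 ⟨by omega, by omega⟩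
        have hq : ((x, y - 1) : ℕ × ℕ) ∈ _ := (hmem x (y - 1)).2 ⟨by omega, by omega⟩
        exact aux_two_le (by simp only [ne_eq, Prod.mk.injEq, not_and]; omega) hp hq hfin
    · by_cases hxr : x = 2 * k + 2 * i
      · by_cases hpar : (x + y) % 2 = 0
        · have hylt : y < k + i := by omega
          have hp : ((2 * k + 2 * i - 1, y) : ℕ × ℕ) ∈ _ :=
            (hmem (2 * k + 2 * i - 1) y).2 ⟨by omega, by omega⟩
          have hq : ((x, y + 1) : ℕ × ℕ) ∈ _ := (hmem x (y + 1)).2 ⟨by omega, by omega⟩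
          exact aux_two_le (by simp only [ne_eq, Prod.mk.injEq, not_and]; omega) hp hq hfin
        · have hygt : i < y := by omega
          have hp : ((2 * k + 2 * i - 1, y) : ℕ × ℕ) ∈ _ :=
            (hmem (2 * k + 2 * i - 1) y).2 ⟨by omega, by omega⟩
          have hq : ((x, y - 1) : ℕ × ℕ) ∈ _ := (hmem x (y - 1)).2 ⟨by omega, by omega⟩
          exact aux_two_le (by simp only [ne_eq, Prod.mk.injEq, not_and]; omega) hp hq hfin
      · have hp : ((x - 1, y) : ℕ × ℕ) ∈ _ := (hmem (x - 1) y).2 ⟨by omega, by omega⟩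
        have hq : ((x + 1, y) : ℕ × ℕ) ∈ _ := (hmem (x + 1) y).2 ⟨by omega, by omega⟩
        exact aux_two_le (by simp only [ne_eq, Prod.mk.injEq, not_and]; omega) hp hq hfin

lemma mem_nbr_sub (m i k : ℕ) (hi : 2 ≤ i) (hk : 2 ≤ k) (hmk : m + 2 = k + 2 * i)
    (x y a b : ℕ) (hx1 : 2 * i - 1 ≤ x) (hx2 : x ≤ 2 * k + 2 * i)
    (hy1 : i ≤ y) (hy2 : y ≤ k + i) :
    ((a, b) ∈ (wallGraph m).neighborSet (x, y) ∩ subwallSet m i) ↔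
      ((2 * i - 1 ≤ a ∧ a ≤ 2 * k + 2 * i ∧ i ≤ b ∧ b ≤ k + i) ∧
       ¬((a = 2 * i - 1 ∧ b = i ∧ i % 2 = 0) ∨
         (a = 2 * k + 2 * i ∧ b = i ∧ i % 2 = 1) ∨
         (a = 2 * i - 1 ∧ b = k + i ∧ (k + i) % 2 = 1) ∨
         (a = 2 * k + 2 * i ∧ b = k + i ∧ (k + i) % 2 = 0)) ∧
       ((b = y ∧ (a = x + 1 ∨ a + 1 = x)) ∨
        (a = x ∧ ((b = y + 1 ∧ (x + y) % 2 = 0) ∨ (b + 1 = y ∧ (x + b) % 2 = 0))))) := by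
  rw [Set.mem_inter_iff, subwall_eq m i k hi hk hmk]
  have h1 := mem_nbr_reg m i k hi hk hmk x y a b hx1 hx2 hy1 hy2
  rw [Set.mem_inter_iff, region_eq m i k hi hk hmk] at h1
  simp only [Set.mem_setOf_eq] at h1 ⊢
  constructor
  · rintro ⟨hadj, hbd, hdel⟩
    obtain ⟨-, hstruct⟩ := h1.1 ⟨hadj, hbd⟩
    exact ⟨hbd, hdel, hstruct⟩
  · rintro ⟨hbd, hdel, hstruct⟩
    exact ⟨(h1.2 ⟨hbd, hstruct⟩).1, hbd, hdel⟩

lemma layer_eq (m i k : ℕ) (hi : 2 ≤ i) (hk : 2 ≤ k) (hmk : m + 2 = k + 2 * i) :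
    layerSet m i = {v | v ∈ subwallSet m i ∧
      (v.2 = i ∨ v.2 = k + i ∨ v.1 = 2 * i - 1 ∨ v.1 = 2 * i ∨
       v.1 = 2 * k + 2 * i - 1 ∨ v.1 = 2 * k + 2 * i)} := by
  ext v
  simp only [layerSet, Set.mem_setOf_eq]
  constructor <;> rintro ⟨h1, h2⟩ <;> exact ⟨h1, by omega⟩

def impF (i k : ℕ) : Finset (ℕ × ℕ) :=
  ((Finset.range k).image fun t => (2 * i + 2 * t + (i + 1) % 2, i)) ∪
  ((Finset.range k).image fun t => (2 * i + 2 * t + (k + i) % 2, k + i)) ∪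
  ((Finset.range (k - 1)).image fun t => (2 * i - 1, i + 1 + t)) ∪
  ((Finset.range (k - 1)).image fun t => (2 * k + 2 * i, i + 1 + t))

lemma mem_impF (i k : ℕ) (hi : 2 ≤ i) (hk : 2 ≤ k) (x y : ℕ) :
    (x, y) ∈ impF i k ↔
      ((y = i ∧ 2 * i ≤ x ∧ x ≤ 2 * k + 2 * i - 1 ∧ (x + i) % 2 = 1) ∨
       (y = k + i ∧ 2 * i ≤ x ∧ x ≤ 2 * k + 2 * i - 1 ∧ (x + k + i) % 2 = 0) ∨
       ((x = 2 * i - 1 ∨ x = 2 * k + 2 * i) ∧ i + 1 ≤ y ∧ y ≤ k + i - 1)) := by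
  simp only [impF, Finset.mem_union, Finset.mem_image, Finset.mem_range, Prod.mk.injEq]
  constructor
  · rintro (((⟨t, ht, h1, h2⟩ | ⟨t, ht, h1, h2⟩) | ⟨t, ht, h1, h2⟩) | ⟨t, ht, h1, h2⟩) <;> omega
  · rintro (⟨h1, h2, h3, h4⟩ | ⟨h1, h2, h3, h4⟩ | ⟨h1, h2, h3⟩)
    · exact Or.inl (Or.inl (Or.inl ⟨(x - 2 * i) / 2, by omega, by omega, by omega⟩))
    · exact Or.inl (Or.inl (Or.inr ⟨(x - 2 * i) / 2, by omega, by omega, by omega⟩))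
    · rcases h1 with h1 | h1
      · exact Or.inl (Or.inr ⟨y - i - 1, by omega, by omega, by omega⟩)
      · exact Or.inr ⟨y - i - 1, by omega, by omega, by omega⟩

lemma impF_card (i k : ℕ) (hi : 2 ≤ i) (hk : 2 ≤ k) : (impF i k).card = 4 * k - 2 := by
  have dis : ∀ (s t : Finset (ℕ × ℕ)),
      (∀ v : ℕ × ℕ, v ∈ s → v ∈ t → False) → Disjoint s t := by
    intro s t h
    rw [Finset.disjoint_left]
    exact fun hv hs ht => h _ hs ht
  have mem1 : ∀ v : ℕ × ℕ, v ∈ ((Finset.range k).image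
      fun t => ((2 * i + 2 * t + (i + 1) % 2, i) : ℕ × ℕ)) →
      v.2 = i ∧ 2 * i ≤ v.1 ∧ v.1 ≤ 2 * k + 2 * i - 1 := by
    rintro ⟨a, b⟩ hm
    simp only [Finset.mem_image, Finset.mem_range, Prod.mk.injEq] at hm
    obtain ⟨t, ht, h1, h2⟩ := hm
    omega
  have mem2 : ∀ v : ℕ × ℕ, v ∈ ((Finset.range k).image
      fun t => ((2 * i + 2 * t + (k + i) % 2, k + i) : ℕ × ℕ)) →
      v.2 = k + i ∧ 2 * i ≤ v.1 ∧ v.1 ≤ 2 * k + 2 * i - 1 := by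
    rintro ⟨a, b⟩ hm
    simp only [Finset.mem_image, Finset.mem_range, Prod.mk.injEq] at hm
    obtain ⟨t, ht, h1, h2⟩ := hm
    omega
  have mem3 : ∀ v : ℕ × ℕ, v ∈ ((Finset.range (k - 1)).image
      fun t => ((2 * i - 1, i + 1 + t) : ℕ × ℕ)) →
      v.1 = 2 * i - 1 ∧ i + 1 ≤ v.2 ∧ v.2 ≤ k + i - 1 := by
    rintro ⟨a, b⟩ hm
    simp only [Finset.mem_image, Finset.mem_range, Prod.mk.injEq] at hm
    obtain ⟨t, ht, h1, h2⟩ := hm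
    omega
  have mem4 : ∀ v : ℕ × ℕ, v ∈ ((Finset.range (k - 1)).image
      fun t => ((2 * k + 2 * i, i + 1 + t) : ℕ × ℕ)) →
      v.1 = 2 * k + 2 * i ∧ i + 1 ≤ v.2 ∧ v.2 ≤ k + i - 1 := by
    rintro ⟨a, b⟩ hm
    simp only [Finset.mem_image, Finset.mem_range, Prod.mk.injEq] at hm
    obtain ⟨t, ht, h1, h2⟩ := hm
    omega
  rw [impF]
  rw [Finset.card_union_of_disjoint (dis _ _ fun v h1 h2 => by
    rcases Finset.mem_union.1 h1 with h1 | h1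
    · rcases Finset.mem_union.1 h1 with h1 | h1
      · have := mem1 v h1; have := mem4 v h2; omega
      · have := mem2 v h1; have := mem4 v h2; omega
    · have := mem3 v h1; have := mem4 v h2; omega)]
  rw [Finset.card_union_of_disjoint (dis _ _ fun v h1 h2 => by
    rcases Finset.mem_union.1 h1 with h1 | h1
    · have := mem1 v h1; have := mem3 v h2; omega
    · have := mem2 v h1; have := mem3 v h2; omega)]
  rw [Finset.card_union_of_disjoint (dis _ _ fun v h1 h2 => by
    have := mem1 v h1; have := mem2 v h2; omega)]
  rw [Finset.card_image_of_injective _ (fun a b h => by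
    simp only [Prod.mk.injEq] at h; omega)]
  rw [Finset.card_image_of_injective _ (fun a b h => by
    simp only [Prod.mk.injEq] at h; omega)]
  rw [Finset.card_image_of_injective _ (fun a b h => by
    simp only [Prod.mk.injEq] at h; omega)]
  rw [Finset.card_image_of_injective _ (fun a b h => by
    simp only [Prod.mk.injEq] at h; omega)]
  simp only [Finset.card_range]
  omega

lemma fwd_corner_bottom (m i k : ℕ) (hi : 2 ≤ i) (hk : 2 ≤ k) (hmk : m + 2 = k + 2 * i)
    (x y : ℕ) (hy : y = i)
    (hend : x = 2 * i - 1 ∨ (x = 2 * i ∧ i % 2 = 0) ∨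
      (x = 2 * k + 2 * i - 1 ∧ i % 2 = 1) ∨ x = 2 * k + 2 * i)
    (hlayer : (x, y) ∈ layerSet m i) : (x, y) ∈ subwallCorners m i := by
  simp only [subwallCorners, Set.mem_setOf_eq]
  refine ⟨hlayer, Or.inl (by omega), fun hb => ?_⟩
  obtain ⟨hl, hr⟩ := hb
  rw [subwall_eq m i k hi hk hmk] at hl hr
  simp only [Set.mem_setOf_eq] at hl hr
  rcases hend with he | ⟨he, hp⟩ | ⟨he, hp⟩ | he
  · obtain ⟨⟨h1, -⟩, -⟩ := hl
    omega
  · obtain ⟨-, hd⟩ := hl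
    exact hd (Or.inl ⟨by omega, by omega, hp⟩)
  · obtain ⟨-, hd⟩ := hr
    exact hd (Or.inr (Or.inl ⟨by omega, by omega, hp⟩))
  · obtain ⟨⟨-, h1, -⟩, -⟩ := hr
    omega

lemma fwd_corner_top (m i k : ℕ) (hi : 2 ≤ i) (hk : 2 ≤ k) (hmk : m + 2 = k + 2 * i)
    (x y : ℕ) (hy : y = k + i)
    (hend : x = 2 * i - 1 ∨ (x = 2 * i ∧ (k + i) % 2 = 1) ∨
      (x = 2 * k + 2 * i - 1 ∧ (k + i) % 2 = 0) ∨ x = 2 * k + 2 * i)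
    (hlayer : (x, y) ∈ layerSet m i) : (x, y) ∈ subwallCorners m i := by
  simp only [subwallCorners, Set.mem_setOf_eq]
  refine ⟨hlayer, Or.inr (by omega), fun hb => ?_⟩
  obtain ⟨hl, hr⟩ := hb
  rw [subwall_eq m i k hi hk hmk] at hl hr
  simp only [Set.mem_setOf_eq] at hl hr
  rcases hend with he | ⟨he, hp⟩ | ⟨he, hp⟩ | he
  · obtain ⟨⟨h1, -⟩, -⟩ := hl
    omega
  · obtain ⟨-, hd⟩ := hl
    exact hd (Or.inr (Or.inr (Or.inl ⟨by omega, by omega, hp⟩)))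
  · obtain ⟨-, hd⟩ := hr
    exact hd (Or.inr (Or.inr (Or.inr ⟨by omega, by omega, hp⟩)))
  · obtain ⟨⟨-, h1, -⟩, -⟩ := hr
    omega

lemma fwd_deg3_bottom (m i k : ℕ) (hi : 2 ≤ i) (hk : 2 ≤ k) (hmk : m + 2 = k + 2 * i)
    (x y : ℕ) (hy : y = i) (hpar : (x + i) % 2 = 0)
    (hx1 : 2 * i + 1 ≤ x) (hx2 : x ≤ 2 * k + 2 * i - 2) :
    3 ≤ ((wallGraph m).neighborSet (x, y) ∩ subwallSet m i).ncard := by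
  have hmem := fun a b => mem_nbr_sub m i k hi hk hmk x y a b
    (by omega) (by omega) (by omega) (by omega)
  exact aux_three_le (p := (x - 1, y)) (q := (x + 1, y)) (r := (x, y + 1))
    (by simp only [ne_eq, Prod.mk.injEq, not_and]; omega)
    (by simp only [ne_eq, Prod.mk.injEq, not_and]; omega)
    (by simp only [ne_eq, Prod.mk.injEq, not_and]; omega)
    ((hmem (x - 1) y).2 ⟨by omega, by omega, by omega⟩)
    ((hmem (x + 1) y).2 ⟨by omega, by omega, by omega⟩)
    ((hmem x (y + 1)).2 ⟨by omega, by omega, by omega⟩)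
    ((nbr_finite m (x, y)).inter_of_left _)

lemma fwd_deg3_top (m i k : ℕ) (hi : 2 ≤ i) (hk : 2 ≤ k) (hmk : m + 2 = k + 2 * i)
    (x y : ℕ) (hy : y = k + i) (hpar : (x + k + i) % 2 = 1)
    (hx1 : 2 * i + 1 ≤ x) (hx2 : x ≤ 2 * k + 2 * i - 2) :
    3 ≤ ((wallGraph m).neighborSet (x, y) ∩ subwallSet m i).ncard := by
  have hmem := fun a b => mem_nbr_sub m i k hi hk hmk x y a b
    (by omega) (by omega) (by omega) (by omega)
  exact aux_three_le (p := (x - 1, y)) (q := (x + 1, y)) (r := (x, y - 1))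
    (by simp only [ne_eq, Prod.mk.injEq, not_and]; omega)
    (by simp only [ne_eq, Prod.mk.injEq, not_and]; omega)
    (by simp only [ne_eq, Prod.mk.injEq, not_and]; omega)
    ((hmem (x - 1) y).2 ⟨by omega, by omega, by omega⟩)
    ((hmem (x + 1) y).2 ⟨by omega, by omega, by omega⟩)
    ((hmem x (y - 1)).2 ⟨by omega, by omega, by omega⟩)
    ((nbr_finite m (x, y)).inter_of_left _)

lemma fwd_deg3_col (m i k : ℕ) (hi : 2 ≤ i) (hk : 2 ≤ k) (hmk : m + 2 = k + 2 * i)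
    (x y : ℕ) (hx : x = 2 * i ∨ x = 2 * k + 2 * i - 1)
    (hy1 : i + 1 ≤ y) (hy2 : y ≤ k + i - 1) :
    3 ≤ ((wallGraph m).neighborSet (x, y) ∩ subwallSet m i).ncard := by
  have hmem := fun a b => mem_nbr_sub m i k hi hk hmk x y a b
    (by omega) (by omega) (by omega) (by omega)
  by_cases hpar : (x + y) % 2 = 0
  · exact aux_three_le (p := (x - 1, y)) (q := (x + 1, y)) (r := (x, y + 1))
      (by simp only [ne_eq, Prod.mk.injEq, not_and]; omega)
      (by simp only [ne_eq, Prod.mk.injEq, not_and]; omega)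
      (by simp only [ne_eq, Prod.mk.injEq, not_and]; omega)
      ((hmem (x - 1) y).2 ⟨by omega, by omega, by omega⟩)
      ((hmem (x + 1) y).2 ⟨by omega, by omega, by omega⟩)
      ((hmem x (y + 1)).2 ⟨by omega, by omega, by omega⟩)
      ((nbr_finite m (x, y)).inter_of_left _)
  · exact aux_three_le (p := (x - 1, y)) (q := (x + 1, y)) (r := (x, y - 1))
      (by simp only [ne_eq, Prod.mk.injEq, not_and]; omega)
      (by simp only [ne_eq, Prod.mk.injEq, not_and]; omega)
      (by simp only [ne_eq, Prod.mk.injEq, not_and]; omega)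
      ((hmem (x - 1) y).2 ⟨by omega, by omega, by omega⟩)
      ((hmem (x + 1) y).2 ⟨by omega, by omega, by omega⟩)
      ((hmem x (y - 1)).2 ⟨by omega, by omega, by omega⟩)
      ((nbr_finite m (x, y)).inter_of_left _)

lemma bwd_row (m i k : ℕ) (hi : 2 ≤ i) (hk : 2 ≤ k) (hmk : m + 2 = k + 2 * i) (x y : ℕ)
    (hcase : (y = i ∧ 2 * i ≤ x ∧ x ≤ 2 * k + 2 * i - 1 ∧ (x + i) % 2 = 1) ∨
             (y = k + i ∧ 2 * i ≤ x ∧ x ≤ 2 * k + 2 * i - 1 ∧ (x + k + i) % 2 = 0)) :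
    (x, y) ∈ importantVertices m i := by
  have hsubeq := subwall_eq m i k hi hk hmk
  simp only [importantVertices, Set.mem_setOf_eq]
  refine ⟨?_, ?_, ?_⟩
  · rw [layer_eq m i k hi hk hmk]
    refine ⟨?_, by omega⟩
    rw [hsubeq]
    exact ⟨⟨by omega, by omega, by omega, by omega⟩, by omega⟩
  · have hN : (wallGraph m).neighborSet (x, y) ∩ subwallSet m i =
        {(x - 1, y), (x + 1, y)} := by
      ext ⟨a, b⟩
      rw [mem_nbr_sub m i k hi hk hmk x y a b (by omega) (by omega) (by omega) (by omega)]
      simp only [Set.mem_insert_iff, Set.mem_singleton_iff, Prod.mk.injEq]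
      constructor
      · rintro ⟨hb, -, hs⟩
        omega
      · intro h
        exact ⟨by omega, by omega, by omega⟩
    rw [hN, Set.ncard_pair (by simp only [ne_eq, Prod.mk.injEq, not_and]; omega)]
  · intro hc
    simp only [subwallCorners, Set.mem_setOf_eq] at hc
    refine hc.2.2 ⟨?_, ?_⟩ <;>
      · rw [hsubeq]
        exact ⟨⟨by omega, by omega, by omega, by omega⟩, by omega⟩

lemma bwd_col (m i k : ℕ) (hi : 2 ≤ i) (hk : 2 ≤ k) (hmk : m + 2 = k + 2 * i) (x y : ℕ)
    (hx : x = 2 * i - 1 ∨ x = 2 * k + 2 * i) (hy1 : i + 1 ≤ y) (hy2 : y ≤ k + i - 1) :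
    (x, y) ∈ importantVertices m i := by
  have hsubeq := subwall_eq m i k hi hk hmk
  simp only [importantVertices, Set.mem_setOf_eq]
  refine ⟨?_, ?_, ?_⟩
  · rw [layer_eq m i k hi hk hmk]
    refine ⟨?_, by omega⟩
    rw [hsubeq]
    exact ⟨⟨by omega, by omega, by omega, by omega⟩, by omega⟩
  · have hmem := fun a b => mem_nbr_sub m i k hi hk hmk x y a b
      (by omega) (by omega) (by omega) (by omega)
    rcases hx with hxv | hxv
    · by_cases hpar : (x + y) % 2 = 0
      · have hN : (wallGraph m).neighborSet (x, y) ∩ subwallSet m i =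
            {(x + 1, y), (x, y + 1)} := by
          ext ⟨a, b⟩
          rw [hmem a b]
          simp only [Set.mem_insert_iff, Set.mem_singleton_iff, Prod.mk.injEq]
          constructor
          · rintro ⟨hb, -, hs⟩
            omega
          · intro h
            exact ⟨by omega, by omega, by omega⟩
        rw [hN, Set.ncard_pair (by simp only [ne_eq, Prod.mk.injEq, not_and]; omega)]
      · have hN : (wallGraph m).neighborSet (x, y) ∩ subwallSet m i =
            {(x + 1, y), (x, y - 1)} := by
          ext ⟨a, b⟩
          rw [hmem a b]
          simp only [Set.mem_insert_iff, Set.mem_singleton_iff, Prod.mk.injEq]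
          constructor
          · rintro ⟨hb, -, hs⟩
            omega
          · intro h
            exact ⟨by omega, by omega, by omega⟩
        rw [hN, Set.ncard_pair (by simp only [ne_eq, Prod.mk.injEq, not_and]; omega)]
    · by_cases hpar : (x + y) % 2 = 0
      · have hN : (wallGraph m).neighborSet (x, y) ∩ subwallSet m i =
            {(x - 1, y), (x, y + 1)} := by
          ext ⟨a, b⟩
          rw [hmem a b]
          simp only [Set.mem_insert_iff, Set.mem_singleton_iff, Prod.mk.injEq]
          constructor
          · rintro ⟨hb, -, hs⟩
            omega
          · intro h
            exact ⟨by omega, by omega, by omega⟩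
        rw [hN, Set.ncard_pair (by simp only [ne_eq, Prod.mk.injEq, not_and]; omega)]
      · have hN : (wallGraph m).neighborSet (x, y) ∩ subwallSet m i =
            {(x - 1, y), (x, y - 1)} := by
          ext ⟨a, b⟩
          rw [hmem a b]
          simp only [Set.mem_insert_iff, Set.mem_singleton_iff, Prod.mk.injEq]
          constructor
          · rintro ⟨hb, -, hs⟩
            omega
          · intro h
            exact ⟨by omega, by omega, by omega⟩
        rw [hN, Set.ncard_pair (by simp only [ne_eq, Prod.mk.injEq, not_and]; omega)]
  · intro hc
    simp only [subwallCorners, Set.mem_setOf_eq] at hc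
    have h2 := hc.2.1
    omega

lemma important_eq (m i k : ℕ) (hi : 2 ≤ i) (hk : 2 ≤ k) (hmk : m + 2 = k + 2 * i) :
    importantVertices m i = ↑(impF i k) := by
  ext ⟨x, y⟩
  rw [Finset.mem_coe, mem_impF i k hi hk]
  constructor
  · rintro ⟨hlayer, hdeg, hcorner⟩
    have hlay := hlayer
    rw [layer_eq m i k hi hk hmk] at hlay
    obtain ⟨hsub, hpos⟩ := hlay
    rw [subwall_eq m i k hi hk hmk] at hsub
    simp only [Set.mem_setOf_eq] at hsub hpos
    obtain ⟨⟨hx1, hx2, hy1, hy2⟩, hdel⟩ := hsub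
    by_cases hyb : y = i
    · by_cases hend : x = 2 * i - 1 ∨ (x = 2 * i ∧ i % 2 = 0) ∨
          (x = 2 * k + 2 * i - 1 ∧ i % 2 = 1) ∨ x = 2 * k + 2 * i
      · exact absurd (fwd_corner_bottom m i k hi hk hmk x y hyb hend hlayer) hcorner
      · by_cases hpar : (x + i) % 2 = 1
        · exact Or.inl ⟨hyb, by omega, by omega, hpar⟩
        · have h3 := fwd_deg3_bottom m i k hi hk hmk x y hyb (by omega) (by omega) (by omega)
          omega
    · by_cases hyt : y = k + i
      · by_cases hend : x = 2 * i - 1 ∨ (x = 2 * i ∧ (k + i) % 2 = 1) ∨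
            (x = 2 * k + 2 * i - 1 ∧ (k + i) % 2 = 0) ∨ x = 2 * k + 2 * i
        · exact absurd (fwd_corner_top m i k hi hk hmk x y hyt hend hlayer) hcorner
        · by_cases hpar : (x + k + i) % 2 = 0
          · exact Or.inr (Or.inl ⟨hyt, by omega, by omega, hpar⟩)
          · have h3 := fwd_deg3_top m i k hi hk hmk x y hyt (by omega) (by omega) (by omega)
            omega
      · by_cases hxc : x = 2 * i ∨ x = 2 * k + 2 * i - 1
        · have h3 := fwd_deg3_col m i k hi hk hmk x y hxc (by omega) (by omega)
          omega
        · exact Or.inr (Or.inr ⟨by omega, by omega, by omega⟩)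
  · rintro (h | h | h)
    · exact bwd_row m i k hi hk hmk x y (Or.inl h)
    · exact bwd_row m i k hi hk hmk x y (Or.inr h)
    · exact bwd_col m i k hi hk hmk x y h.1 h.2.1 h.2.2

/-- for `k ≥ 2`, a layer of a wall that is different from the perimeter
(`2 ≤ i`) and defines a subwall of height `k` (i.e. `m + 2 = k + 2i`) contains exactly
`4k - 2` important vertices. -/
theorem card_importantVertices (m i k : ℕ) (hi : 2 ≤ i) (hk : 2 ≤ k)
    (hmk : m + 2 = k + 2 * i) :
    (importantVertices m i).ncard = 4 * k - 2 := by
  rw [important_eq m i k hi hk hmk, Set.ncard_coe_finset, impF_card i k hi hk]
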